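/- Whiskering of laminated 2-tracks by 1-tracks is well defined: if g and g' are laminated rank-2 homotopic 2-paths in M, γ and γ' are rank-1 homotopic 1-paths, and γ(1) equals the single point g(ℝ×{0}), then the left whiskerings γ∘g and γ'∘g' are laminated rank-2 homotopic; similarly, if the single point g(ℝ×{1}) equals γ(0), then the right whiskerings g∘γ and g'∘γ' are laminated rank-2 homotopic. -/

import Mathlib

open scoped Manifold

variable (E : Type*) [NormedAddCommGroup E] [NormedSpace ℝ E] [FiniteDimensional ℝ E]
variable {M : Type*} [TopologicalSpace M] [ChartedSpace E M]
  [IsManifold 𝓘(ℝ, E) (⊤ : ℕ∞) M]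

/-- A 1-path in `M`: a smooth map `ℝ → M` that is constant near `(-∞, 0]` and near
`[1, ∞)` (in the sense of the `ε`-conditions). -/
def IsOnePath (γ : ℝ → M) : Prop :=
  ContMDiff 𝓘(ℝ, ℝ) 𝓘(ℝ, E) (⊤ : ℕ∞) γ ∧
    ∃ ε > (0 : ℝ), (∀ t ≤ ε, γ t = γ 0) ∧ (∀ t, 1 - ε ≤ t → γ t = γ 1)

/-- A 2-path in `M`, as a smooth map `ℝ × ℝ → M` with coordinates `(s, t)`,
constant near the boundary in each variable, whose images at `t = 0` and `t = 1`
are single points. -/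
def IsTwoPath (g : ℝ × ℝ → M) : Prop :=
  ContMDiff 𝓘(ℝ, ℝ × ℝ) 𝓘(ℝ, E) (⊤ : ℕ∞) g ∧
    (∃ ε > (0 : ℝ),
      (∀ s t, s ≤ ε → g (s, t) = g (0, t)) ∧
      (∀ s t, 1 - ε ≤ s → g (s, t) = g (1, t)) ∧
      (∀ s t, t ≤ ε → g (s, t) = g (s, 0)) ∧
      (∀ s t, 1 - ε ≤ t → g (s, t) = g (s, 1))) ∧
    (∀ s s', g (s, 0) = g (s', 0)) ∧ (∀ s s', g (s, 1) = g (s', 1))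

/-- A rank-1 homotopy: a 2-path whose differential has rank at most 1 at every point. -/
def IsRank1Homotopy (h : ℝ × ℝ → M) : Prop :=
  IsTwoPath E h ∧
    ∀ p : ℝ × ℝ,
      Module.finrank ℝ
        (LinearMap.range (mfderiv 𝓘(ℝ, ℝ × ℝ) 𝓘(ℝ, E) h p).toLinearMap) ≤ 1

/-- Two 1-paths are rank-1 homotopic if they are joined by a rank-1 homotopy. -/
def Rank1Homotopic (γ γ' : ℝ → M) : Prop :=
  ∃ h : ℝ × ℝ → M, IsRank1Homotopy E h ∧ (∀ t, h (0, t) = γ t) ∧ (∀ t, h (1, t) = γ' t)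

/-- A 3-path in `M`, as a smooth map `ℝ × ℝ × ℝ → M` with coordinates `(r, s, t)`. -/
def IsThreePath (α : ℝ × ℝ × ℝ → M) : Prop :=
  ContMDiff 𝓘(ℝ, ℝ × ℝ × ℝ) 𝓘(ℝ, E) (⊤ : ℕ∞) α ∧
    (∃ ε > (0 : ℝ),
      (∀ r s t, r ≤ ε → α (r, s, t) = α (0, s, t)) ∧
      (∀ r s t, 1 - ε ≤ r → α (r, s, t) = α (1, s, t)) ∧
      (∀ r s t, s ≤ ε → α (r, s, t) = α (r, 0, t)) ∧
      (∀ r s t, 1 - ε ≤ s → α (r, s, t) = α (r, 1, t)) ∧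
      (∀ r s t, t ≤ ε → α (r, s, t) = α (r, s, 0)) ∧
      (∀ r s t, 1 - ε ≤ t → α (r, s, t) = α (r, s, 1))) ∧
    (∀ r s r' s', α (r, s, 0) = α (r', s', 0)) ∧
    (∀ r s r' s', α (r, s, 1) = α (r', s', 1))

/-- A rank-2 homotopy: a 3-path whose differential has rank at most 2 at every point and
whose restrictions to `s = 0` and `s = 1` are rank-1 homotopies. -/
def IsRank2Homotopy (α : ℝ × ℝ × ℝ → M) : Prop :=
  IsThreePath E α ∧
    (∀ p : ℝ × ℝ × ℝ,
      Module.finrank ℝ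
        (LinearMap.range (mfderiv 𝓘(ℝ, ℝ × ℝ × ℝ) 𝓘(ℝ, E) α p).toLinearMap) ≤ 2) ∧
    IsRank1Homotopy E (fun p : ℝ × ℝ => α (p.1, 0, p.2)) ∧
    IsRank1Homotopy E (fun p : ℝ × ℝ => α (p.1, 1, p.2))

/-- `α` is a rank-2 homotopy from the 2-path `g` to the 2-path `g'`. -/
def Rank2HomotopyFrom (α : ℝ × ℝ × ℝ → M) (g g' : ℝ × ℝ → M) : Prop :=
  IsRank2Homotopy E α ∧ (∀ s t, α (0, s, t) = g (s, t)) ∧ (∀ s t, α (1, s, t) = g' (s, t))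

/-- Two 2-paths are rank-2 homotopic if they are joined by a rank-2 homotopy. -/
def Rank2Homotopic (g g' : ℝ × ℝ → M) : Prop :=
  ∃ α : ℝ × ℝ × ℝ → M, Rank2HomotopyFrom E α g g'

/-- The laminatedness condition for a map `ℝ × ℝ × ℝ → M` with coordinates `(r, s, t)`,
expressed via the partial derivatives (the images of the coordinate vectors under the
differential). -/
def IsLaminated (α : ℝ × ℝ × ℝ → M) : Prop :=
  ∀ r s : ℝ,
    (∀ t : ℝ, ∃ a b : ℝ, (a, b) ≠ (0, 0) ∧
        a • mfderiv 𝓘(ℝ, ℝ × ℝ × ℝ) 𝓘(ℝ, E) α (r, s, t) (1, 0, 0) +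
          b • mfderiv 𝓘(ℝ, ℝ × ℝ × ℝ) 𝓘(ℝ, E) α (r, s, t) (0, 0, 1) = 0) ∨
    (∀ t : ℝ, ∃ a b : ℝ, (a, b) ≠ (0, 0) ∧
        a • mfderiv 𝓘(ℝ, ℝ × ℝ × ℝ) 𝓘(ℝ, E) α (r, s, t) (0, 1, 0) +
          b • mfderiv 𝓘(ℝ, ℝ × ℝ × ℝ) 𝓘(ℝ, E) α (r, s, t) (0, 0, 1) = 0) ∨
    (∃ a b : ℝ, (a, b) ≠ (0, 0) ∧ ∀ t : ℝ,
        a • mfderiv 𝓘(ℝ, ℝ × ℝ × ℝ) 𝓘(ℝ, E) α (r, s, t) (1, 0, 0) +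
          b • mfderiv 𝓘(ℝ, ℝ × ℝ × ℝ) 𝓘(ℝ, E) α (r, s, t) (0, 1, 0) = 0)

/-- A laminated rank-2 homotopy. -/
def IsLaminatedRank2Homotopy (α : ℝ × ℝ × ℝ → M) : Prop :=
  IsRank2Homotopy E α ∧ IsLaminated E α

/-- Two 2-paths are laminated rank-2 homotopic if they are joined by a laminated
rank-2 homotopy. -/
def LamRank2Homotopic (g g' : ℝ × ℝ → M) : Prop :=
  ∃ α : ℝ × ℝ × ℝ → M, IsLaminatedRank2Homotopy E α ∧
    (∀ s t, α (0, s, t) = g (s, t)) ∧ (∀ s t, α (1, s, t) = g' (s, t))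

/-- Left whiskering of a 2-path `g` with a 1-path `γ`. -/
noncomputable def leftWhisker (γ : ℝ → M) (g : ℝ × ℝ → M) : ℝ × ℝ → M := fun p =>
  if p.2 ≤ 1 / 2 then γ (2 * p.2) else g (p.1, 2 * p.2 - 1)

/-- Right whiskering of a 2-path `g` with a 1-path `γ`. -/
noncomputable def rightWhisker (g : ℝ × ℝ → M) (γ : ℝ → M) : ℝ × ℝ → M := fun p =>
  if p.2 ≤ 1 / 2 then g (p.1, 2 * p.2) else γ (2 * p.2 - 1)

section Aux

open Module Submodule Filter

variable {V : Type*} [AddCommGroup V] [Module ℝ V]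

/-- finrank of the span of a singleton is at most 1. -/
theorem finrank_span_singleton_le' (u : V) : Module.finrank ℝ (span ℝ ({u} : Set V)) ≤ 1 := by
  by_cases hu : u = 0
  · rw [hu, Submodule.span_zero_singleton]; simp
  · rw [finrank_span_singleton hu]

theorem span_pair_finrank_le {u v : V} (h : ∃ a b : ℝ, (a, b) ≠ (0, 0) ∧ a • u + b • v = 0) :
    Module.finrank ℝ (span ℝ ({u, v} : Set V)) ≤ 1 := by
  obtain ⟨a, b, hab, h0⟩ := h
  by_cases ha : a = 0
  · have hb : b ≠ 0 := by
      intro hb; exact hab (by simp [ha, hb, Prod.ext_iff])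
    have hv : v = 0 := by
      have : b • v = 0 := by simpa [ha] using h0
      simpa [hb] using this
    have hle : span ℝ ({u, v} : Set V) ≤ span ℝ ({u} : Set V) := by
      rw [span_le]
      rintro x (rfl | rfl)
      · exact subset_span rfl
      · simp [hv]
    exact le_trans (Submodule.finrank_mono hle) (finrank_span_singleton_le' u)
  · have hu : u = (-(b/a)) • v := by
      have : a • u = -(b • v) := by
        rw [eq_neg_iff_add_eq_zero]; exact h0
      have := congrArg (fun w => a⁻¹ • w) this
      simpa [smul_smul, ha, div_eq_mul_inv, mul_comm, neg_smul, smul_neg] using this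
    have hle : span ℝ ({u, v} : Set V) ≤ span ℝ ({v} : Set V) := by
      rw [span_le]
      rintro x (rfl | rfl)
      · rw [hu]; exact smul_mem _ _ (subset_span rfl)
      · exact subset_span rfl
    exact le_trans (Submodule.finrank_mono hle) (finrank_span_singleton_le' v)

theorem dep_pair [FiniteDimensional ℝ V] {u v : V} {S : Submodule ℝ V} (hu : u ∈ S) (hv : v ∈ S)
    (hS : Module.finrank ℝ S ≤ 1) :
    ∃ a b : ℝ, (a, b) ≠ (0, 0) ∧ a • u + b • v = 0 := by
  by_cases hu0 : u = 0
  · exact ⟨1, 0, by simp [Prod.ext_iff], by simp [hu0]⟩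
  · have h1 : Module.finrank ℝ (span ℝ ({u} : Set V)) = 1 := finrank_span_singleton hu0
    have hle : span ℝ ({u} : Set V) ≤ S := by
      rw [span_le]; rintro x rfl; exact hu
    have heq : span ℝ ({u} : Set V) = S :=
      Submodule.eq_of_le_of_finrank_le hle (le_trans hS h1.ge)
    have : v ∈ span ℝ ({u} : Set V) := heq ▸ hv
    obtain ⟨c, hc⟩ := Submodule.mem_span_singleton.1 this
    exact ⟨c, -1, by simp [Prod.ext_iff], by simp [← hc]⟩

theorem dep_pair_smul [FiniteDimensional ℝ V] (c d : ℝ) {u v : V}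
    (h : ∃ a b : ℝ, (a, b) ≠ (0, 0) ∧ a • u + b • v = 0) :
    ∃ a b : ℝ, (a, b) ≠ (0, 0) ∧ a • (c • u) + b • (d • v) = 0 := by
  have hspan := span_pair_finrank_le h
  have hu : c • u ∈ span ℝ ({u, v} : Set V) :=
    smul_mem _ c (subset_span (by left; rfl))
  have hv : d • v ∈ span ℝ ({u, v} : Set V) :=
    smul_mem _ d (subset_span (by right; rfl))
  exact dep_pair hu hv hspan

end Aux
set_option linter.unusedSectionVars false

section Aux2

open Module Submodule Filter

variable {E}

instance (x : M) : FiniteDimensional ℝ (TangentSpace 𝓘(ℝ, E) x) :=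
  inferInstanceAs (FiniteDimensional ℝ E)

theorem mfderiv_model_apply {X Y : Type*} [NormedAddCommGroup X] [NormedSpace ℝ X]
    [NormedAddCommGroup Y] [NormedSpace ℝ Y]
    {F : Y → M} (hF : ContMDiff 𝓘(ℝ, Y) 𝓘(ℝ, E) (⊤ : ℕ∞) F)
    {A : X → Y} (hA : ContDiff ℝ ((⊤ : ℕ∞) : WithTop ℕ∞) A) {α : X → M} {p : X}
    (hloc : α =ᶠ[nhds p] fun x => F (A x)) (v : X) :
    mfderiv 𝓘(ℝ, X) 𝓘(ℝ, E) α p v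
      = mfderiv 𝓘(ℝ, Y) 𝓘(ℝ, E) F (A p) (fderiv ℝ A p v) := by
  have h1 : MDifferentiableAt 𝓘(ℝ, Y) 𝓘(ℝ, E) F (A p) := hF.mdifferentiableAt (by simp)
  have h2 : MDifferentiableAt 𝓘(ℝ, X) 𝓘(ℝ, Y) A p :=
    (hA.contMDiff.mdifferentiableAt (by simp))
  have hc := mfderiv_comp (I' := 𝓘(ℝ, Y)) p h1 h2
  have he : mfderiv 𝓘(ℝ, X) 𝓘(ℝ, E) α p = mfderiv 𝓘(ℝ, X) 𝓘(ℝ, E) (F ∘ A) p :=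
    hloc.mfderiv_eq
  rw [he, hc]
  show mfderiv 𝓘(ℝ, Y) 𝓘(ℝ, E) F (A p) (mfderiv 𝓘(ℝ, X) 𝓘(ℝ, Y) A p v) = _
  rw [mfderiv_eq_fderiv]; rfl

theorem mfderiv_model_rank_le {X Y : Type*} [NormedAddCommGroup X] [NormedSpace ℝ X]
    [NormedAddCommGroup Y] [NormedSpace ℝ Y]
    {F : Y → M} (hF : ContMDiff 𝓘(ℝ, Y) 𝓘(ℝ, E) (⊤ : ℕ∞) F)
    {A : X → Y} (hA : ContDiff ℝ ((⊤ : ℕ∞) : WithTop ℕ∞) A) {α : X → M} {p : X}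
    (hloc : α =ᶠ[nhds p] fun x => F (A x)) {n : ℕ}
    (hn : Module.finrank ℝ
      (LinearMap.range (mfderiv 𝓘(ℝ, Y) 𝓘(ℝ, E) F (A p)).toLinearMap) ≤ n) :
    Module.finrank ℝ (LinearMap.range (mfderiv 𝓘(ℝ, X) 𝓘(ℝ, E) α p).toLinearMap) ≤ n := by
  have heq : α p = F (A p) := hloc.self_of_nhds
  haveI : FiniteDimensional ℝ (TangentSpace 𝓘(ℝ, E) (F (A p))) := inferInstanceAs (FiniteDimensional ℝ E)
  haveI : FiniteDimensional ℝ (TangentSpace 𝓘(ℝ, E) (F (A p))) := inferInstanceAs (FiniteDimensional ℝ E)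
  refine le_trans (@Submodule.finrank_mono _ _ _ _ _ _ _ _ (FiniteDimensional.finiteDimensional_submodule _) ?_) hn
  intro y hy
  obtain ⟨v, rfl⟩ := hy
  exact ⟨fderiv ℝ A p v, (mfderiv_model_apply hF hA hloc v).symm⟩

end Aux2
section Aux3

open Module Submodule Filter

variable {E}

/-- The inner reparametrization map for 3-variable models. -/
noncomputable def innerMap (f : ℝ → ℝ) (a b : ℝ) : ℝ × ℝ × ℝ → ℝ × ℝ × ℝ :=
  fun q => (f q.1, q.2.1, a * q.2.2 + b)

theorem contDiff_innerMap {f : ℝ → ℝ} (hf : ContDiff ℝ ((⊤ : ℕ∞) : WithTop ℕ∞) f)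
    (a b : ℝ) : ContDiff ℝ ((⊤ : ℕ∞) : WithTop ℕ∞) (innerMap f a b) := by
  apply ContDiff.prodMk (hf.comp contDiff_fst)
  apply ContDiff.prodMk (contDiff_fst.comp contDiff_snd)
  exact (contDiff_const.mul (contDiff_snd.comp contDiff_snd)).add contDiff_const

theorem hasFDerivAt_innerMap {f : ℝ → ℝ} (hf : ContDiff ℝ ((⊤ : ℕ∞) : WithTop ℕ∞) f)
    (a b : ℝ) (q : ℝ × ℝ × ℝ) :
    HasFDerivAt (innerMap f a b)
      (((deriv f q.1) • (ContinuousLinearMap.fst ℝ ℝ (ℝ × ℝ))).prod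
        (((ContinuousLinearMap.fst ℝ ℝ ℝ).comp (ContinuousLinearMap.snd ℝ ℝ (ℝ × ℝ))).prod
          (a • ((ContinuousLinearMap.snd ℝ ℝ ℝ).comp (ContinuousLinearMap.snd ℝ ℝ (ℝ × ℝ)))))) q := by
  have hd : Differentiable ℝ f := hf.differentiable (by simp)
  have h1 : HasFDerivAt (fun q : ℝ × ℝ × ℝ => f q.1)
      ((deriv f q.1) • (ContinuousLinearMap.fst ℝ ℝ (ℝ × ℝ))) q :=
    (hd q.1).hasDerivAt.comp_hasFDerivAt q (hasFDerivAt_fst)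
  have h2 : HasFDerivAt (fun q : ℝ × ℝ × ℝ => q.2.1)
      ((ContinuousLinearMap.fst ℝ ℝ ℝ).comp (ContinuousLinearMap.snd ℝ ℝ (ℝ × ℝ))) q :=
    (hasFDerivAt_fst.comp q hasFDerivAt_snd)
  have h3 : HasFDerivAt (fun q : ℝ × ℝ × ℝ => a * q.2.2 + b)
      (a • ((ContinuousLinearMap.snd ℝ ℝ ℝ).comp (ContinuousLinearMap.snd ℝ ℝ (ℝ × ℝ)))) q := by
    exact ((hasFDerivAt_snd.comp q hasFDerivAt_snd).const_mul a).add_const b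
  exact h1.prodMk (h2.prodMk h3)

theorem fderiv_innerMap_r {f : ℝ → ℝ} (hf : ContDiff ℝ ((⊤ : ℕ∞) : WithTop ℕ∞) f)
    (a b : ℝ) (q : ℝ × ℝ × ℝ) :
    fderiv ℝ (innerMap f a b) q (1, 0, 0) = (deriv f q.1, 0, 0) := by
  rw [(hasFDerivAt_innerMap hf a b q).fderiv]
  simp

theorem fderiv_innerMap_s {f : ℝ → ℝ} (hf : ContDiff ℝ ((⊤ : ℕ∞) : WithTop ℕ∞) f)
    (a b : ℝ) (q : ℝ × ℝ × ℝ) :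
    fderiv ℝ (innerMap f a b) q (0, 1, 0) = (0, 1, 0) := by
  rw [(hasFDerivAt_innerMap hf a b q).fderiv]
  simp

theorem fderiv_innerMap_t {f : ℝ → ℝ} (hf : ContDiff ℝ ((⊤ : ℕ∞) : WithTop ℕ∞) f)
    (a b : ℝ) (q : ℝ × ℝ × ℝ) :
    fderiv ℝ (innerMap f a b) q (0, 0, 1) = (0, 0, a) := by
  rw [(hasFDerivAt_innerMap hf a b q).fderiv]
  simp

end Aux3
section Aux4

open Module Submodule Filter

variable {E}

theorem glue_laminated {G1 G2 : ℝ × ℝ × ℝ → M} {δ ε : ℝ}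
    (hδ : 0 < δ) (hε : 0 < ε) (hε4 : ε ≤ 1/4)
    (hG1 : ContMDiff 𝓘(ℝ, ℝ × ℝ × ℝ) 𝓘(ℝ, E) (⊤ : ℕ∞) G1)
    (hG2 : ContMDiff 𝓘(ℝ, ℝ × ℝ × ℝ) 𝓘(ℝ, E) (⊤ : ℕ∞) G2)
    (hov : ∀ p : ℝ × ℝ × ℝ, 1/2 - δ < p.2.2 → p.2.2 < 1/2 + δ → G1 p = G2 p)
    (br1 : ∀ r s t : ℝ, r ≤ ε → G1 (r, s, t) = G1 (0, s, t))
    (br1' : ∀ r s t : ℝ, 1 - ε ≤ r → G1 (r, s, t) = G1 (1, s, t))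
    (bs1 : ∀ r s t : ℝ, s ≤ ε → G1 (r, s, t) = G1 (r, 0, t))
    (bs1' : ∀ r s t : ℝ, 1 - ε ≤ s → G1 (r, s, t) = G1 (r, 1, t))
    (bt1 : ∀ r s t : ℝ, t ≤ ε → G1 (r, s, t) = G1 (r, s, 0))
    (br2 : ∀ r s t : ℝ, r ≤ ε → G2 (r, s, t) = G2 (0, s, t))
    (br2' : ∀ r s t : ℝ, 1 - ε ≤ r → G2 (r, s, t) = G2 (1, s, t))
    (bs2 : ∀ r s t : ℝ, s ≤ ε → G2 (r, s, t) = G2 (r, 0, t))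
    (bs2' : ∀ r s t : ℝ, 1 - ε ≤ s → G2 (r, s, t) = G2 (r, 1, t))
    (bt2 : ∀ r s t : ℝ, 1 - ε ≤ t → G2 (r, s, t) = G2 (r, s, 1))
    (sing0 : ∀ r s r' s' : ℝ, G1 (r, s, 0) = G1 (r', s', 0))
    (sing1 : ∀ r s r' s' : ℝ, G2 (r, s, 1) = G2 (r', s', 1))
    (rk1 : ∀ p, Module.finrank ℝ
      (LinearMap.range (mfderiv 𝓘(ℝ, ℝ × ℝ × ℝ) 𝓘(ℝ, E) G1 p).toLinearMap) ≤ 2)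
    (rk2 : ∀ p, Module.finrank ℝ
      (LinearMap.range (mfderiv 𝓘(ℝ, ℝ × ℝ × ℝ) 𝓘(ℝ, E) G2 p).toLinearMap) ≤ 2)
    (rr1 : ∀ c : ℝ, c = 0 ∨ c = 1 → ∀ p : ℝ × ℝ, Module.finrank ℝ
      (LinearMap.range (mfderiv 𝓘(ℝ, ℝ × ℝ) 𝓘(ℝ, E)
        (fun q : ℝ × ℝ => G1 (q.1, c, q.2)) p).toLinearMap) ≤ 1)
    (rr2 : ∀ c : ℝ, c = 0 ∨ c = 1 → ∀ p : ℝ × ℝ, Module.finrank ℝ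
      (LinearMap.range (mfderiv 𝓘(ℝ, ℝ × ℝ) 𝓘(ℝ, E)
        (fun q : ℝ × ℝ => G2 (q.1, c, q.2)) p).toLinearMap) ≤ 1)
    (lam : ∀ r s : ℝ,
      ((∀ t : ℝ, ∃ a b : ℝ, (a, b) ≠ (0, 0) ∧
          a • mfderiv 𝓘(ℝ, ℝ × ℝ × ℝ) 𝓘(ℝ, E) G1 (r, s, t) (1, 0, 0) +
            b • mfderiv 𝓘(ℝ, ℝ × ℝ × ℝ) 𝓘(ℝ, E) G1 (r, s, t) (0, 0, 1) = 0) ∧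
        (∀ t : ℝ, ∃ a b : ℝ, (a, b) ≠ (0, 0) ∧
          a • mfderiv 𝓘(ℝ, ℝ × ℝ × ℝ) 𝓘(ℝ, E) G2 (r, s, t) (1, 0, 0) +
            b • mfderiv 𝓘(ℝ, ℝ × ℝ × ℝ) 𝓘(ℝ, E) G2 (r, s, t) (0, 0, 1) = 0)) ∨
      ((∀ t : ℝ, ∃ a b : ℝ, (a, b) ≠ (0, 0) ∧
          a • mfderiv 𝓘(ℝ, ℝ × ℝ × ℝ) 𝓘(ℝ, E) G1 (r, s, t) (0, 1, 0) +
            b • mfderiv 𝓘(ℝ, ℝ × ℝ × ℝ) 𝓘(ℝ, E) G1 (r, s, t) (0, 0, 1) = 0) ∧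
        (∀ t : ℝ, ∃ a b : ℝ, (a, b) ≠ (0, 0) ∧
          a • mfderiv 𝓘(ℝ, ℝ × ℝ × ℝ) 𝓘(ℝ, E) G2 (r, s, t) (0, 1, 0) +
            b • mfderiv 𝓘(ℝ, ℝ × ℝ × ℝ) 𝓘(ℝ, E) G2 (r, s, t) (0, 0, 1) = 0)) ∨
      (∃ a b : ℝ, (a, b) ≠ (0, 0) ∧ ∀ t : ℝ,
          a • mfderiv 𝓘(ℝ, ℝ × ℝ × ℝ) 𝓘(ℝ, E) G1 (r, s, t) (1, 0, 0) +
            b • mfderiv 𝓘(ℝ, ℝ × ℝ × ℝ) 𝓘(ℝ, E) G1 (r, s, t) (0, 1, 0) = 0 ∧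
          a • mfderiv 𝓘(ℝ, ℝ × ℝ × ℝ) 𝓘(ℝ, E) G2 (r, s, t) (1, 0, 0) +
            b • mfderiv 𝓘(ℝ, ℝ × ℝ × ℝ) 𝓘(ℝ, E) G2 (r, s, t) (0, 1, 0) = 0)) :
    IsLaminatedRank2Homotopy E (fun p : ℝ × ℝ × ℝ => if p.2.2 ≤ 1/2 then G1 p else G2 p) := by
  set α : ℝ × ℝ × ℝ → M := fun p => if p.2.2 ≤ 1/2 then G1 p else G2 p with hα
  -- pointwise identification on the two open strips
  have hU1 : ∀ p : ℝ × ℝ × ℝ, p.2.2 < 1/2 + δ → α p = G1 p := by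
    intro p hp
    by_cases ht : p.2.2 ≤ 1/2
    · show (if p.2.2 ≤ 1/2 then G1 p else G2 p) = G1 p
      rw [if_pos ht]
    · show (if p.2.2 ≤ 1/2 then G1 p else G2 p) = G1 p
      rw [if_neg ht]
      exact (hov p (by push_neg at ht; linarith) hp).symm
  have hU2 : ∀ p : ℝ × ℝ × ℝ, 1/2 - δ < p.2.2 → α p = G2 p := by
    intro p hp
    by_cases ht : p.2.2 ≤ 1/2
    · show (if p.2.2 ≤ 1/2 then G1 p else G2 p) = G2 p
      rw [if_pos ht]
      exact hov p hp (by linarith)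
    · show (if p.2.2 ≤ 1/2 then G1 p else G2 p) = G2 p
      rw [if_neg ht]
  have o1 : IsOpen {q : ℝ × ℝ × ℝ | q.2.2 < 1/2 + δ} :=
    isOpen_lt (continuous_snd.snd) continuous_const
  have o2 : IsOpen {q : ℝ × ℝ × ℝ | 1/2 - δ < q.2.2} :=
    isOpen_lt continuous_const (continuous_snd.snd)
  have loc1 : ∀ p : ℝ × ℝ × ℝ, p.2.2 ≤ 1/2 → α =ᶠ[nhds p] G1 := by
    intro p hp
    exact Filter.eventuallyEq_of_mem (o1.mem_nhds (by simp only [Set.mem_setOf_eq]; linarith))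
      (fun q hq => hU1 q hq)
  have loc2 : ∀ p : ℝ × ℝ × ℝ, 1/2 ≤ p.2.2 → α =ᶠ[nhds p] G2 := by
    intro p hp
    exact Filter.eventuallyEq_of_mem (o2.mem_nhds (by simp only [Set.mem_setOf_eq]; linarith))
      (fun q hq => hU2 q hq)
  -- smoothness
  have hsm : ContMDiff 𝓘(ℝ, ℝ × ℝ × ℝ) 𝓘(ℝ, E) (⊤ : ℕ∞) α := by
    intro p
    by_cases ht : p.2.2 ≤ 1/2
    · exact ((hG1.contMDiffAt).congr_of_eventuallyEq (loc1 p ht)).contMDiffWithinAt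
    · exact ((hG2.contMDiffAt).congr_of_eventuallyEq
        (loc2 p (by push_neg at ht; linarith))).contMDiffWithinAt
  have hval : ∀ r s t : ℝ, α (r, s, t) = if t ≤ 1/2 then G1 (r, s, t) else G2 (r, s, t) :=
    fun _ _ _ => rfl
  have h3p : IsThreePath E α := by
    refine ⟨hsm, ⟨ε, hε, ?_, ?_, ?_, ?_, ?_, ?_⟩, ?_, ?_⟩
    · intro r s t hr
      rw [hval, hval]
      split_ifs with ht
      · exact br1 r s t hr
      · exact br2 r s t hr
    · intro r s t hr
      rw [hval, hval]
      split_ifs with ht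
      · exact br1' r s t hr
      · exact br2' r s t hr
    · intro r s t hs
      rw [hval, hval]
      split_ifs with ht
      · exact bs1 r s t hs
      · exact bs2 r s t hs
    · intro r s t hs
      rw [hval, hval]
      split_ifs with ht
      · exact bs1' r s t hs
      · exact bs2' r s t hs
    · intro r s t htt
      rw [hval, hval, if_pos (show t ≤ 1/2 by linarith), if_pos (by norm_num : (0:ℝ) ≤ 1/2)]
      exact bt1 r s t htt
    · intro r s t htt
      rw [hval, hval, if_neg (show ¬ t ≤ 1/2 by intro h; linarith),
        if_neg (by norm_num : ¬ (1:ℝ) ≤ 1/2)]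
      exact bt2 r s t htt
    · intro r s r' s'
      rw [hval, hval]
      rw [if_pos (by norm_num : (0:ℝ) ≤ 1/2), if_pos (by norm_num : (0:ℝ) ≤ 1/2)]
      exact sing0 r s r' s'
    · intro r s r' s'
      rw [hval, hval]
      rw [if_neg (by norm_num : ¬ (1:ℝ) ≤ 1/2), if_neg (by norm_num : ¬ (1:ℝ) ≤ 1/2)]
      exact sing1 r s r' s'
  have hrk : ∀ p : ℝ × ℝ × ℝ, Module.finrank ℝ
      (LinearMap.range (mfderiv 𝓘(ℝ, ℝ × ℝ × ℝ) 𝓘(ℝ, E) α p).toLinearMap) ≤ 2 := by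
    intro p
    by_cases ht : p.2.2 ≤ 1/2
    · rw [(loc1 p ht).mfderiv_eq]; exact rk1 p
    · rw [(loc2 p (by push_neg at ht; linarith)).mfderiv_eq]; exact rk2 p
  have key : ∀ c : ℝ, c = 0 ∨ c = 1 →
      IsRank1Homotopy E (fun p : ℝ × ℝ => α (p.1, c, p.2)) := by
    intro c hc
    have hrval : ∀ q : ℝ × ℝ, α (q.1, c, q.2)
        = if q.2 ≤ 1/2 then G1 (q.1, c, q.2) else G2 (q.1, c, q.2) := fun _ => rfl
    have o1' : IsOpen {q : ℝ × ℝ | q.2 < 1/2 + δ} :=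
      isOpen_lt continuous_snd continuous_const
    have o2' : IsOpen {q : ℝ × ℝ | 1/2 - δ < q.2} :=
      isOpen_lt continuous_const continuous_snd
    have l1 : ∀ q : ℝ × ℝ, q.2 ≤ 1/2 → (fun q : ℝ × ℝ => α (q.1, c, q.2))
        =ᶠ[nhds q] (fun q : ℝ × ℝ => G1 (q.1, c, q.2)) := by
      intro q hq
      exact Filter.eventuallyEq_of_mem (o1'.mem_nhds (by simp only [Set.mem_setOf_eq]; linarith))
        (fun x hx => hU1 (x.1, c, x.2) hx)
    have l2 : ∀ q : ℝ × ℝ, 1/2 ≤ q.2 → (fun q : ℝ × ℝ => α (q.1, c, q.2))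
        =ᶠ[nhds q] (fun q : ℝ × ℝ => G2 (q.1, c, q.2)) := by
      intro q hq
      exact Filter.eventuallyEq_of_mem (o2'.mem_nhds (by simp only [Set.mem_setOf_eq]; linarith))
        (fun x hx => hU2 (x.1, c, x.2) hx)
    have hj : ContDiff ℝ ((⊤ : ℕ∞) : WithTop ℕ∞)
        (fun q : ℝ × ℝ => ((q.1, c, q.2) : ℝ × ℝ × ℝ)) :=
      contDiff_fst.prodMk (contDiff_const.prodMk contDiff_snd)
    have hsm1 : ContMDiff 𝓘(ℝ, ℝ × ℝ) 𝓘(ℝ, E) (⊤ : ℕ∞) (fun q : ℝ × ℝ => G1 (q.1, c, q.2)) :=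
      hG1.comp hj.contMDiff
    have hsm2 : ContMDiff 𝓘(ℝ, ℝ × ℝ) 𝓘(ℝ, E) (⊤ : ℕ∞) (fun q : ℝ × ℝ => G2 (q.1, c, q.2)) :=
      hG2.comp hj.contMDiff
    constructor
    · refine ⟨?_, ⟨ε, hε, ?_, ?_, ?_, ?_⟩, ?_, ?_⟩
      · intro q
        by_cases ht : q.2 ≤ 1/2
        · exact ((hsm1.contMDiffAt).congr_of_eventuallyEq (l1 q ht)).contMDiffWithinAt
        · exact ((hsm2.contMDiffAt).congr_of_eventuallyEq
            (l2 q (by push_neg at ht; linarith))).contMDiffWithinAt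
      · intro r t hr
        show α (r, c, t) = α (0, c, t)
        rw [hval, hval]
        split_ifs with ht
        · exact br1 r c t hr
        · exact br2 r c t hr
      · intro r t hr
        show α (r, c, t) = α (1, c, t)
        rw [hval, hval]
        split_ifs with ht
        · exact br1' r c t hr
        · exact br2' r c t hr
      · intro r t htt
        show α (r, c, t) = α (r, c, 0)
        rw [hval, hval, if_pos (show t ≤ 1/2 by linarith), if_pos (by norm_num : (0:ℝ) ≤ 1/2)]
        exact bt1 r c t htt
      · intro r t htt
        show α (r, c, t) = α (r, c, 1)
        rw [hval, hval, if_neg (show ¬ t ≤ 1/2 by intro h; linarith),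
          if_neg (by norm_num : ¬ (1:ℝ) ≤ 1/2)]
        exact bt2 r c t htt
      · intro r r'
        show α (r, c, 0) = α (r', c, 0)
        rw [hval, hval,
          if_pos (by norm_num : (0:ℝ) ≤ 1/2), if_pos (by norm_num : (0:ℝ) ≤ 1/2)]
        exact sing0 r c r' c
      · intro r r'
        show α (r, c, 1) = α (r', c, 1)
        rw [hval, hval,
          if_neg (by norm_num : ¬ (1:ℝ) ≤ 1/2), if_neg (by norm_num : ¬ (1:ℝ) ≤ 1/2)]
        exact sing1 r c r' c
    · intro q
      by_cases ht : q.2 ≤ 1/2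
      · rw [(l1 q ht).mfderiv_eq]; exact rr1 c hc q
      · rw [(l2 q (by push_neg at ht; linarith)).mfderiv_eq]; exact rr2 c hc q
  have hlam : IsLaminated E α := by
    intro r s
    rcases lam r s with ⟨h1, h2⟩ | ⟨h1, h2⟩ | ⟨a, b, hab, h12⟩
    · left
      intro t
      by_cases ht : t ≤ 1/2
      · rw [(loc1 (r, s, t) ht).mfderiv_eq]; exact h1 t
      · rw [(loc2 (r, s, t) (by push_neg at ht; linarith : (1:ℝ)/2 ≤ t)).mfderiv_eq]
        exact h2 t
    · right; left
      intro t
      by_cases ht : t ≤ 1/2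
      · rw [(loc1 (r, s, t) ht).mfderiv_eq]; exact h1 t
      · rw [(loc2 (r, s, t) (by push_neg at ht; linarith : (1:ℝ)/2 ≤ t)).mfderiv_eq]
        exact h2 t
    · right; right
      refine ⟨a, b, hab, fun t => ?_⟩
      by_cases ht : t ≤ 1/2
      · rw [(loc1 (r, s, t) ht).mfderiv_eq]; exact (h12 t).1
      · rw [(loc2 (r, s, t) (by push_neg at ht; linarith : (1:ℝ)/2 ≤ t)).mfderiv_eq]
        exact (h12 t).2
  exact ⟨⟨h3p, hrk, key 0 (Or.inl rfl), key 1 (Or.inr rfl)⟩, hlam⟩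

end Aux4
section Aux5

open Module Submodule Filter

variable {E}

/-- 3-var to 2-var inner reparametrization. -/
noncomputable def innerMap2 (f : ℝ → ℝ) (a b : ℝ) : ℝ × ℝ × ℝ → ℝ × ℝ :=
  fun q => (f q.1, a * q.2.2 + b)

theorem contDiff_innerMap2 {f : ℝ → ℝ} (hf : ContDiff ℝ ((⊤ : ℕ∞) : WithTop ℕ∞) f)
    (a b : ℝ) : ContDiff ℝ ((⊤ : ℕ∞) : WithTop ℕ∞) (innerMap2 f a b) :=
  (hf.comp contDiff_fst).prodMk
    ((contDiff_const.mul (contDiff_snd.comp contDiff_snd)).add contDiff_const)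

theorem hasFDerivAt_innerMap2 {f : ℝ → ℝ} (hf : ContDiff ℝ ((⊤ : ℕ∞) : WithTop ℕ∞) f)
    (a b : ℝ) (q : ℝ × ℝ × ℝ) :
    HasFDerivAt (innerMap2 f a b)
      (((deriv f q.1) • (ContinuousLinearMap.fst ℝ ℝ (ℝ × ℝ))).prod
        (a • ((ContinuousLinearMap.snd ℝ ℝ ℝ).comp (ContinuousLinearMap.snd ℝ ℝ (ℝ × ℝ))))) q := by
  have hd : Differentiable ℝ f := hf.differentiable (by simp)
  exact ((hd q.1).hasDerivAt.comp_hasFDerivAt q (hasFDerivAt_fst)).prodMk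
    (((hasFDerivAt_snd.comp q hasFDerivAt_snd).const_mul a).add_const b)

theorem fderiv_innerMap2_r {f : ℝ → ℝ} (hf : ContDiff ℝ ((⊤ : ℕ∞) : WithTop ℕ∞) f)
    (a b : ℝ) (q : ℝ × ℝ × ℝ) :
    fderiv ℝ (innerMap2 f a b) q (1, 0, 0) = (deriv f q.1, 0) := by
  rw [(hasFDerivAt_innerMap2 hf a b q).fderiv]; simp

theorem fderiv_innerMap2_s {f : ℝ → ℝ} (hf : ContDiff ℝ ((⊤ : ℕ∞) : WithTop ℕ∞) f)
    (a b : ℝ) (q : ℝ × ℝ × ℝ) :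
    fderiv ℝ (innerMap2 f a b) q (0, 1, 0) = (0, 0) := by
  rw [(hasFDerivAt_innerMap2 hf a b q).fderiv]; simp

theorem fderiv_innerMap2_t {f : ℝ → ℝ} (hf : ContDiff ℝ ((⊤ : ℕ∞) : WithTop ℕ∞) f)
    (a b : ℝ) (q : ℝ × ℝ × ℝ) :
    fderiv ℝ (innerMap2 f a b) q (0, 0, 1) = (0, a) := by
  rw [(hasFDerivAt_innerMap2 hf a b q).fderiv]; simp

/-- derivative of a locally constant function vanishes. -/
theorem deriv_zero_of_const_on {f : ℝ → ℝ} {c x : ℝ} {U : Set ℝ} (hU : IsOpen U) (hx : x ∈ U)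
    (h : ∀ y ∈ U, f y = c) : deriv f x = 0 := by
  have he : f =ᶠ[nhds x] fun _ => c :=
    Filter.eventuallyEq_of_mem (hU.mem_nhds hx) h
  rw [he.deriv_eq, deriv_const]

end Aux5

section Aux6

open Module Submodule Filter

variable {E}

/-- Facts about the `h`-type model `fun x => h (f x.1, a * x.2.2 + b)`. -/
theorem hModel_smooth {h : ℝ × ℝ → M} (hh : ContMDiff 𝓘(ℝ, ℝ × ℝ) 𝓘(ℝ, E) (⊤ : ℕ∞) h)
    {f : ℝ → ℝ} (hf : ContDiff ℝ ((⊤ : ℕ∞) : WithTop ℕ∞) f) (a b : ℝ) :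
    ContMDiff 𝓘(ℝ, ℝ × ℝ × ℝ) 𝓘(ℝ, E) (⊤ : ℕ∞) (fun x : ℝ × ℝ × ℝ => h (f x.1, a * x.2.2 + b)) :=
  hh.comp (contDiff_innerMap2 hf a b).contMDiff

theorem hModel_rank {h : ℝ × ℝ → M} (hh : ContMDiff 𝓘(ℝ, ℝ × ℝ) 𝓘(ℝ, E) (⊤ : ℕ∞) h)
    (hrk : ∀ q : ℝ × ℝ, Module.finrank ℝ
      (LinearMap.range (mfderiv 𝓘(ℝ, ℝ × ℝ) 𝓘(ℝ, E) h q).toLinearMap) ≤ 1)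
    {f : ℝ → ℝ} (hf : ContDiff ℝ ((⊤ : ℕ∞) : WithTop ℕ∞) f) (a b : ℝ) (p : ℝ × ℝ × ℝ) :
    Module.finrank ℝ (LinearMap.range (mfderiv 𝓘(ℝ, ℝ × ℝ × ℝ) 𝓘(ℝ, E)
      (fun x : ℝ × ℝ × ℝ => h (f x.1, a * x.2.2 + b)) p).toLinearMap) ≤ 1 :=
  mfderiv_model_rank_le hh (contDiff_innerMap2 hf a b)
    (Filter.Eventually.of_forall fun _ => rfl) (hrk _)

theorem hModel_dep {h : ℝ × ℝ → M} (hh : ContMDiff 𝓘(ℝ, ℝ × ℝ) 𝓘(ℝ, E) (⊤ : ℕ∞) h)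
    (hrk : ∀ q : ℝ × ℝ, Module.finrank ℝ
      (LinearMap.range (mfderiv 𝓘(ℝ, ℝ × ℝ) 𝓘(ℝ, E) h q).toLinearMap) ≤ 1)
    {f : ℝ → ℝ} (hf : ContDiff ℝ ((⊤ : ℕ∞) : WithTop ℕ∞) f) (a b : ℝ) (p : ℝ × ℝ × ℝ)
    (v w : ℝ × ℝ × ℝ) :
    ∃ c d : ℝ, (c, d) ≠ (0, 0) ∧
      c • mfderiv 𝓘(ℝ, ℝ × ℝ × ℝ) 𝓘(ℝ, E)
          (fun x : ℝ × ℝ × ℝ => h (f x.1, a * x.2.2 + b)) p v +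
        d • mfderiv 𝓘(ℝ, ℝ × ℝ × ℝ) 𝓘(ℝ, E)
          (fun x : ℝ × ℝ × ℝ => h (f x.1, a * x.2.2 + b)) p w = 0 := by
  set G : ℝ × ℝ × ℝ → M := fun x : ℝ × ℝ × ℝ => h (f x.1, a * x.2.2 + b) with hG
  have heq : ∀ u : ℝ × ℝ × ℝ, mfderiv 𝓘(ℝ, ℝ × ℝ × ℝ) 𝓘(ℝ, E) G p u
      = mfderiv 𝓘(ℝ, ℝ × ℝ) 𝓘(ℝ, E) h (innerMap2 f a b p) (fderiv ℝ (innerMap2 f a b) p u) :=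
    fun u => mfderiv_model_apply hh (contDiff_innerMap2 hf a b)
      (Filter.Eventually.of_forall fun _ => rfl) u
  have hu : mfderiv 𝓘(ℝ, ℝ × ℝ × ℝ) 𝓘(ℝ, E) G p v
      ∈ LinearMap.range (mfderiv 𝓘(ℝ, ℝ × ℝ) 𝓘(ℝ, E) h (innerMap2 f a b p)).toLinearMap := by
    rw [heq v]; exact ⟨_, rfl⟩
  have hw : mfderiv 𝓘(ℝ, ℝ × ℝ × ℝ) 𝓘(ℝ, E) G p w
      ∈ LinearMap.range (mfderiv 𝓘(ℝ, ℝ × ℝ) 𝓘(ℝ, E) h (innerMap2 f a b p)).toLinearMap := by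
    rw [heq w]; exact ⟨_, rfl⟩
  exact dep_pair hu hw (hrk _)

theorem hModel_ds {h : ℝ × ℝ → M} (hh : ContMDiff 𝓘(ℝ, ℝ × ℝ) 𝓘(ℝ, E) (⊤ : ℕ∞) h)
    {f : ℝ → ℝ} (hf : ContDiff ℝ ((⊤ : ℕ∞) : WithTop ℕ∞) f) (a b : ℝ) (p : ℝ × ℝ × ℝ) :
    mfderiv 𝓘(ℝ, ℝ × ℝ × ℝ) 𝓘(ℝ, E)
      (fun x : ℝ × ℝ × ℝ => h (f x.1, a * x.2.2 + b)) p (0, 1, 0) = 0 := by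
  have hev : (fun x : ℝ × ℝ × ℝ => h (f x.1, a * x.2.2 + b))
      =ᶠ[nhds p] (fun x => h (innerMap2 f a b x)) :=
    Filter.Eventually.of_forall fun _ => rfl
  have heq := mfderiv_model_apply hh (contDiff_innerMap2 hf a b) hev (0, 1, 0)
  rw [heq, fderiv_innerMap2_s hf a b p]
  have : ((0 : ℝ), (0 : ℝ)) = (0 : ℝ × ℝ) := rfl
  rw [this]; exact map_zero _

theorem hModel_dr {h : ℝ × ℝ → M} (hh : ContMDiff 𝓘(ℝ, ℝ × ℝ) 𝓘(ℝ, E) (⊤ : ℕ∞) h)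
    {f : ℝ → ℝ} (hf : ContDiff ℝ ((⊤ : ℕ∞) : WithTop ℕ∞) f) (a b : ℝ) (p : ℝ × ℝ × ℝ)
    (hd : deriv f p.1 = 0) :
    mfderiv 𝓘(ℝ, ℝ × ℝ × ℝ) 𝓘(ℝ, E)
      (fun x : ℝ × ℝ × ℝ => h (f x.1, a * x.2.2 + b)) p (1, 0, 0) = 0 := by
  have hev : (fun x : ℝ × ℝ × ℝ => h (f x.1, a * x.2.2 + b))
      =ᶠ[nhds p] (fun x => h (innerMap2 f a b x)) :=
    Filter.Eventually.of_forall fun _ => rfl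
  have heq := mfderiv_model_apply hh (contDiff_innerMap2 hf a b) hev (1, 0, 0)
  rw [heq, fderiv_innerMap2_r hf a b p, hd]
  have : ((0 : ℝ), (0 : ℝ)) = (0 : ℝ × ℝ) := rfl
  rw [this]; exact map_zero _

end Aux6
section Aux7

open Module Submodule Filter

variable {E}

theorem bModel_smooth {β : ℝ × ℝ × ℝ → M} (hβ : ContMDiff 𝓘(ℝ, ℝ × ℝ × ℝ) 𝓘(ℝ, E) (⊤ : ℕ∞) β)
    {f : ℝ → ℝ} (hf : ContDiff ℝ ((⊤ : ℕ∞) : WithTop ℕ∞) f) (a b : ℝ) :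
    ContMDiff 𝓘(ℝ, ℝ × ℝ × ℝ) 𝓘(ℝ, E) (⊤ : ℕ∞)
      (fun x : ℝ × ℝ × ℝ => β (f x.1, x.2.1, a * x.2.2 + b)) :=
  hβ.comp (contDiff_innerMap hf a b).contMDiff

theorem bModel_rank {β : ℝ × ℝ × ℝ → M} (hβ : ContMDiff 𝓘(ℝ, ℝ × ℝ × ℝ) 𝓘(ℝ, E) (⊤ : ℕ∞) β)
    (hrk : ∀ q : ℝ × ℝ × ℝ, Module.finrank ℝ
      (LinearMap.range (mfderiv 𝓘(ℝ, ℝ × ℝ × ℝ) 𝓘(ℝ, E) β q).toLinearMap) ≤ 2)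
    {f : ℝ → ℝ} (hf : ContDiff ℝ ((⊤ : ℕ∞) : WithTop ℕ∞) f) (a b : ℝ) (p : ℝ × ℝ × ℝ) :
    Module.finrank ℝ (LinearMap.range (mfderiv 𝓘(ℝ, ℝ × ℝ × ℝ) 𝓘(ℝ, E)
      (fun x : ℝ × ℝ × ℝ => β (f x.1, x.2.1, a * x.2.2 + b)) p).toLinearMap) ≤ 2 :=
  mfderiv_model_rank_le hβ (contDiff_innerMap hf a b)
    (Filter.Eventually.of_forall fun _ => rfl) (hrk _)

theorem bModel_dr {β : ℝ × ℝ × ℝ → M} (hβ : ContMDiff 𝓘(ℝ, ℝ × ℝ × ℝ) 𝓘(ℝ, E) (⊤ : ℕ∞) β)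
    {f : ℝ → ℝ} (hf : ContDiff ℝ ((⊤ : ℕ∞) : WithTop ℕ∞) f) (a b : ℝ) (p : ℝ × ℝ × ℝ) :
    mfderiv 𝓘(ℝ, ℝ × ℝ × ℝ) 𝓘(ℝ, E)
        (fun x : ℝ × ℝ × ℝ => β (f x.1, x.2.1, a * x.2.2 + b)) p (1, 0, 0)
      = deriv f p.1 •
        mfderiv 𝓘(ℝ, ℝ × ℝ × ℝ) 𝓘(ℝ, E) β (innerMap f a b p) (1, 0, 0) := by
  have hev : (fun x : ℝ × ℝ × ℝ => β (f x.1, x.2.1, a * x.2.2 + b))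
      =ᶠ[nhds p] (fun x => β (innerMap f a b x)) :=
    Filter.Eventually.of_forall fun _ => rfl
  have heq := mfderiv_model_apply hβ (contDiff_innerMap hf a b) hev (1, 0, 0)
  rw [heq, fderiv_innerMap_r hf a b p]
  have h2 : ((deriv f p.1 : ℝ), (0 : ℝ), (0 : ℝ))
      = deriv f p.1 • (((1 : ℝ), (0 : ℝ), (0 : ℝ)) : ℝ × ℝ × ℝ) := by
    simp [Prod.ext_iff]
  rw [h2]; exact (mfderiv 𝓘(ℝ, ℝ × ℝ × ℝ) 𝓘(ℝ, E) β (innerMap f a b p)).map_smul _ _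

theorem bModel_ds {β : ℝ × ℝ × ℝ → M} (hβ : ContMDiff 𝓘(ℝ, ℝ × ℝ × ℝ) 𝓘(ℝ, E) (⊤ : ℕ∞) β)
    {f : ℝ → ℝ} (hf : ContDiff ℝ ((⊤ : ℕ∞) : WithTop ℕ∞) f) (a b : ℝ) (p : ℝ × ℝ × ℝ) :
    mfderiv 𝓘(ℝ, ℝ × ℝ × ℝ) 𝓘(ℝ, E)
        (fun x : ℝ × ℝ × ℝ => β (f x.1, x.2.1, a * x.2.2 + b)) p (0, 1, 0)
      = mfderiv 𝓘(ℝ, ℝ × ℝ × ℝ) 𝓘(ℝ, E) β (innerMap f a b p) (0, 1, 0) := by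
  have hev : (fun x : ℝ × ℝ × ℝ => β (f x.1, x.2.1, a * x.2.2 + b))
      =ᶠ[nhds p] (fun x => β (innerMap f a b x)) :=
    Filter.Eventually.of_forall fun _ => rfl
  have heq := mfderiv_model_apply hβ (contDiff_innerMap hf a b) hev (0, 1, 0)
  rw [heq, fderiv_innerMap_s hf a b p]

theorem bModel_dt {β : ℝ × ℝ × ℝ → M} (hβ : ContMDiff 𝓘(ℝ, ℝ × ℝ × ℝ) 𝓘(ℝ, E) (⊤ : ℕ∞) β)
    {f : ℝ → ℝ} (hf : ContDiff ℝ ((⊤ : ℕ∞) : WithTop ℕ∞) f) (a b : ℝ) (p : ℝ × ℝ × ℝ) :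
    mfderiv 𝓘(ℝ, ℝ × ℝ × ℝ) 𝓘(ℝ, E)
        (fun x : ℝ × ℝ × ℝ => β (f x.1, x.2.1, a * x.2.2 + b)) p (0, 0, 1)
      = a • mfderiv 𝓘(ℝ, ℝ × ℝ × ℝ) 𝓘(ℝ, E) β (innerMap f a b p) (0, 0, 1) := by
  have hev : (fun x : ℝ × ℝ × ℝ => β (f x.1, x.2.1, a * x.2.2 + b))
      =ᶠ[nhds p] (fun x => β (innerMap f a b x)) :=
    Filter.Eventually.of_forall fun _ => rfl
  have heq := mfderiv_model_apply hβ (contDiff_innerMap hf a b) hev (0, 0, 1)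
  rw [heq, fderiv_innerMap_t hf a b p]
  have h2 : ((0 : ℝ), (0 : ℝ), (a : ℝ)) = a • (((0 : ℝ), (0 : ℝ), (1 : ℝ)) : ℝ × ℝ × ℝ) := by
    simp [Prod.ext_iff]
  rw [h2]; exact (mfderiv 𝓘(ℝ, ℝ × ℝ × ℝ) 𝓘(ℝ, E) β (innerMap f a b p)).map_smul _ _

/-- Restriction-rank lemma for 2-var models. -/
theorem restr_rank_le {F : ℝ × ℝ → M} (hF : ContMDiff 𝓘(ℝ, ℝ × ℝ) 𝓘(ℝ, E) (⊤ : ℕ∞) F)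
    (hrk : ∀ q : ℝ × ℝ, Module.finrank ℝ
      (LinearMap.range (mfderiv 𝓘(ℝ, ℝ × ℝ) 𝓘(ℝ, E) F q).toLinearMap) ≤ 1)
    {f : ℝ → ℝ} (hf : ContDiff ℝ ((⊤ : ℕ∞) : WithTop ℕ∞) f) (a b : ℝ)
    {ρ : ℝ × ℝ → M} (hρ : ∀ q : ℝ × ℝ, ρ q = F (f q.1, a * q.2 + b)) (p : ℝ × ℝ) :
    Module.finrank ℝ (LinearMap.range (mfderiv 𝓘(ℝ, ℝ × ℝ) 𝓘(ℝ, E) ρ p).toLinearMap) ≤ 1 := by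
  have hA : ContDiff ℝ ((⊤ : ℕ∞) : WithTop ℕ∞)
      (fun q : ℝ × ℝ => ((f q.1, a * q.2 + b) : ℝ × ℝ)) :=
    (hf.comp contDiff_fst).prodMk ((contDiff_const.mul contDiff_snd).add contDiff_const)
  exact mfderiv_model_rank_le hF hA (Filter.Eventually.of_forall fun x => hρ x) (hrk _)

end Aux7
section Aux8

open Module Submodule Filter

/-- A smooth step function: `0` for `r ≤ c/5`, `1` for `r ≥ (c+1)/5`. -/
noncomputable def stepFun (c : ℝ) : ℝ → ℝ := fun r => Real.smoothTransition (5 * r - c)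

theorem contDiff_stepFun (c : ℝ) : ContDiff ℝ ((⊤ : ℕ∞) : WithTop ℕ∞) (stepFun c) :=
  Real.smoothTransition.contDiff.comp
    ((contDiff_const.mul contDiff_id).sub contDiff_const)

theorem stepFun_eq_zero {c r : ℝ} (h : r ≤ c / 5) : stepFun c r = 0 :=
  Real.smoothTransition.zero_of_nonpos (by nlinarith)

theorem stepFun_eq_one {c r : ℝ} (h : (c + 1) / 5 ≤ r) : stepFun c r = 1 :=
  Real.smoothTransition.one_of_one_le (by nlinarith)

theorem deriv_stepFun_left {c r : ℝ} (h : r < c / 5) : deriv (stepFun c) r = 0 :=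
  deriv_zero_of_const_on isOpen_Iio h (fun y hy => stepFun_eq_zero (le_of_lt hy))

theorem deriv_stepFun_right {c r : ℝ} (h : (c + 1) / 5 < r) : deriv (stepFun c) r = 0 :=
  deriv_zero_of_const_on isOpen_Ioi h (fun y hy => stepFun_eq_one (le_of_lt hy))

end Aux8
section Aux9

open Module Submodule Filter

variable {E}

set_option maxHeartbeats 1600000 in
theorem left_whisker_homotopic {g g' : ℝ × ℝ → M} {γ γ' : ℝ → M}
    {β : ℝ × ℝ × ℝ → M} {h : ℝ × ℝ → M}
    (hβ : IsLaminatedRank2Homotopy E β)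
    (hβ0 : ∀ s t, β (0, s, t) = g (s, t)) (hβ1 : ∀ s t, β (1, s, t) = g' (s, t))
    (hh : IsRank1Homotopy E h)
    (hh0 : ∀ t, h (0, t) = γ t) (hh1 : ∀ t, h (1, t) = γ' t)
    (hmatch : γ 1 = g (0, 0)) :
    LamRank2Homotopic E (leftWhisker γ g) (leftWhisker γ' g') := by
  obtain ⟨⟨⟨hsmβ, ⟨εβ, hεβ0, βbr, βbr', βbs, βbs', βbt, βbt'⟩, βs0, βs1⟩, βrk, βr0, βr1⟩, βlam⟩ := hβ
  obtain ⟨⟨hsmh, ⟨εh, hεh0, hbr, hbr', hbt, hbt'⟩, hs0, hs1⟩, hrk⟩ := hh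
  have hφ := contDiff_stepFun 1
  have hψ := contDiff_stepFun 3
  set φ : ℝ → ℝ := stepFun 1 with hφdef
  set ψ : ℝ → ℝ := stepFun 3 with hψdef
  have φ0 : ∀ r : ℝ, r ≤ 1/5 → φ r = 0 := fun r hr => stepFun_eq_zero (by linarith)
  have φ1 : ∀ r : ℝ, 2/5 ≤ r → φ r = 1 := fun r hr => stepFun_eq_one (by norm_num; linarith)
  have ψ0 : ∀ r : ℝ, r ≤ 3/5 → ψ r = 0 := fun r hr => stepFun_eq_zero (by linarith)
  have ψ1 : ∀ r : ℝ, 4/5 ≤ r → ψ r = 1 := fun r hr => stepFun_eq_one (by norm_num; linarith)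
  have dφ : ∀ r : ℝ, 2/5 < r → deriv φ r = 0 := fun r hr => deriv_stepFun_right (by norm_num; linarith)
  have dψ : ∀ r : ℝ, r < 3/5 → deriv ψ r = 0 := fun r hr => deriv_stepFun_left (by linarith)
  set ε : ℝ := min (min (1/5) (εh/2)) (εβ/2) with hεdef
  set δ : ℝ := min (εh/2) (εβ/2) with hδdef
  have hε0 : 0 < ε := lt_min (lt_min (by norm_num) (by linarith)) (by linarith)
  have hδ0 : 0 < δ := lt_min (by linarith) (by linarith)
  have hε1 : ε ≤ 1/5 := le_trans (min_le_left _ _) (min_le_left _ _)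
  have hε2 : ε ≤ εh/2 := le_trans (min_le_left _ _) (min_le_right _ _)
  have hε3 : ε ≤ εβ/2 := min_le_right _ _
  have hδ1 : δ ≤ εh/2 := min_le_left _ _
  have hδ2 : δ ≤ εβ/2 := min_le_right _ _
  have key := glue_laminated (E := E)
    (G1 := fun x : ℝ × ℝ × ℝ => h (φ x.1, 2 * x.2.2 + 0))
    (G2 := fun x : ℝ × ℝ × ℝ => β (ψ x.1, x.2.1, 2 * x.2.2 + (-1)))
    hδ0 hε0 (by linarith)
    (hModel_smooth hsmh hφ 2 0)
    (bModel_smooth hsmβ hψ 2 (-1))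
    (by -- overlap
      rintro ⟨r, s, t⟩ h1 h2
      simp only at h1 h2
      show h (φ r, 2 * t + 0) = β (ψ r, s, 2 * t + (-1))
      have e1 : h (φ r, 2 * t + 0) = h (φ r, 1) := hbt' (φ r) _ (by linarith)
      have e2 : β (ψ r, s, 2 * t + (-1)) = β (ψ r, s, 0) := βbt (ψ r) s _ (by linarith)
      rw [e1, e2, hs1 (φ r) 0, hh0 1, hmatch, ← hβ0 0 0, βs0 (ψ r) s 0 0])
    (by -- br1
      intro r s t hr
      show h (φ r, 2 * t + 0) = h (φ 0, 2 * t + 0)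
      rw [φ0 r (by linarith), φ0 0 (by norm_num)])
    (by -- br1'
      intro r s t hr
      show h (φ r, 2 * t + 0) = h (φ 1, 2 * t + 0)
      rw [φ1 r (by linarith), φ1 1 (by norm_num)])
    (by -- bs1
      intro r s t _
      rfl)
    (by intro r s t _; rfl)
    (by -- bt1
      intro r s t ht
      show h (φ r, 2 * t + 0) = h (φ r, 2 * 0 + 0)
      rw [show (2 * (0:ℝ) + 0) = 0 by norm_num]
      exact hbt (φ r) _ (by linarith))
    (by -- br2
      intro r s t hr
      show β (ψ r, s, 2 * t + (-1)) = β (ψ 0, s, 2 * t + (-1))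
      rw [ψ0 r (by linarith), ψ0 0 (by norm_num)])
    (by -- br2'
      intro r s t hr
      show β (ψ r, s, 2 * t + (-1)) = β (ψ 1, s, 2 * t + (-1))
      rw [ψ1 r (by linarith), ψ1 1 (by norm_num)])
    (by -- bs2
      intro r s t hs
      exact βbs (ψ r) s _ (by linarith))
    (by -- bs2'
      intro r s t hs
      exact βbs' (ψ r) s _ (by linarith))
    (by -- bt2
      intro r s t ht
      show β (ψ r, s, 2 * t + (-1)) = β (ψ r, s, 2 * 1 + (-1))
      rw [show (2 * (1:ℝ) + (-1)) = 1 by norm_num]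
      exact βbt' (ψ r) s _ (by linarith))
    (by -- sing0
      intro r s r' s'
      show h (φ r, 2 * 0 + 0) = h (φ r', 2 * 0 + 0)
      rw [show (2 * (0:ℝ) + 0) = 0 by norm_num]
      exact hs0 (φ r) (φ r'))
    (by -- sing1
      intro r s r' s'
      show β (ψ r, s, 2 * 1 + (-1)) = β (ψ r', s', 2 * 1 + (-1))
      rw [show (2 * (1:ℝ) + (-1)) = 1 by norm_num]
      exact βs1 (ψ r) s (ψ r') s')
    (fun p => le_trans (hModel_rank hsmh hrk hφ 2 0 p) (by norm_num))
    (bModel_rank hsmβ βrk hψ 2 (-1))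
    (by -- rr1
      intro c _ p
      exact restr_rank_le hsmh hrk hφ 2 0 (fun q => rfl) p)
    (by -- rr2
      intro c hc p
      rcases hc with rfl | rfl
      · exact restr_rank_le βr0.1.1 βr0.2 hψ 2 (-1) (fun q => rfl) p
      · exact restr_rank_le βr1.1.1 βr1.2 hψ 2 (-1) (fun q => rfl) p)
    (by -- lamination
      intro r s
      by_cases hr : r ≤ 1/2
      · left
        constructor
        · intro t
          exact hModel_dep hsmh hrk hφ 2 0 (r, s, t) (1, 0, 0) (0, 0, 1)
        · intro t
          refine ⟨1, 0, by simp, ?_⟩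
          rw [bModel_dr hsmβ hψ 2 (-1) (r, s, t), dψ r (by linarith)]
          simp
          exact smul_zero (A := E) (1 : ℝ)
      · push_neg at hr
        have hdφ : deriv φ r = 0 := dφ r (by linarith)
        have hdr1 : ∀ t : ℝ, mfderiv 𝓘(ℝ, ℝ × ℝ × ℝ) 𝓘(ℝ, E)
            (fun x : ℝ × ℝ × ℝ => h (φ x.1, 2 * x.2.2 + 0)) (r, s, t) (1, 0, 0) = 0 :=
          fun t => hModel_dr hsmh hφ 2 0 (r, s, t) hdφ
        have hds1 : ∀ t : ℝ, mfderiv 𝓘(ℝ, ℝ × ℝ × ℝ) 𝓘(ℝ, E)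
            (fun x : ℝ × ℝ × ℝ => h (φ x.1, 2 * x.2.2 + 0)) (r, s, t) (0, 1, 0) = 0 :=
          fun t => hModel_ds hsmh hφ 2 0 (r, s, t)
        rcases βlam (ψ r) s with hcase | hcase | ⟨a, b, hab, hall⟩
        · left
          constructor
          · intro t
            exact ⟨1, 0, by simp, by rw [hdr1 t]; simp⟩
          · intro t
            obtain ⟨a, b, hab, hsum⟩ := hcase (2 * t + (-1))
            obtain ⟨c, d, hcd, hsum2⟩ := dep_pair_smul (deriv ψ r) (2 : ℝ) ⟨a, b, hab, hsum⟩
            refine ⟨c, d, hcd, ?_⟩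
            rw [bModel_dr hsmβ hψ 2 (-1) (r, s, t), bModel_dt hsmβ hψ 2 (-1) (r, s, t),
              show innerMap ψ 2 (-1) (r, s, t) = (ψ r, s, 2 * t + (-1)) from rfl]
            exact hsum2
        · right; left
          constructor
          · intro t
            exact ⟨1, 0, by simp, by rw [hds1 t]; simp⟩
          · intro t
            obtain ⟨a, b, hab, hsum⟩ := hcase (2 * t + (-1))
            obtain ⟨c, d, hcd, hsum2⟩ := dep_pair_smul (1 : ℝ) (2 : ℝ) ⟨a, b, hab, hsum⟩
            refine ⟨c, d, hcd, ?_⟩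
            rw [bModel_ds hsmβ hψ 2 (-1) (r, s, t), bModel_dt hsmβ hψ 2 (-1) (r, s, t),
              show innerMap ψ 2 (-1) (r, s, t) = (ψ r, s, 2 * t + (-1)) from rfl]
            simpa using hsum2
        · right; right
          by_cases ha : a = 0
          · have hb : b ≠ 0 := by
              intro hb; exact hab (by simp [ha, hb, Prod.ext_iff])
            refine ⟨0, 1, by simp, fun t => ⟨?_, ?_⟩⟩
            · rw [hds1 t]; simp
            · have h0 := hall (2 * t + (-1))
              rw [ha] at h0
              have hY : mfderiv 𝓘(ℝ, ℝ × ℝ × ℝ) 𝓘(ℝ, E) β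
                  (innerMap ψ 2 (-1) (r, s, t)) (0, 1, 0) = 0 := by
                have := h0
                simp only [zero_smul, zero_add] at this
                exact (smul_eq_zero.1 this).resolve_left hb
              rw [bModel_ds hsmβ hψ 2 (-1) (r, s, t), hY]
              simp
              exact smul_zero (A := E) (1 : ℝ)
          · refine ⟨a, deriv ψ r * b, by simp [Prod.ext_iff, ha], fun t => ⟨?_, ?_⟩⟩
            · rw [hdr1 t, hds1 t]; simp
            · rw [bModel_dr hsmβ hψ 2 (-1) (r, s, t), bModel_ds hsmβ hψ 2 (-1) (r, s, t)]
              have h0 := hall (2 * t + (-1))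
              have hrw : innerMap ψ 2 (-1) (r, s, t) = (ψ r, s, 2 * t + (-1)) := rfl
              rw [hrw]
              have : a • (deriv ψ r • mfderiv 𝓘(ℝ, ℝ × ℝ × ℝ) 𝓘(ℝ, E) β
                    (ψ r, s, 2 * t + (-1)) (1, 0, 0)) +
                  (deriv ψ r * b) • mfderiv 𝓘(ℝ, ℝ × ℝ × ℝ) 𝓘(ℝ, E) β
                    (ψ r, s, 2 * t + (-1)) (0, 1, 0)
                  = deriv ψ r • (a • mfderiv 𝓘(ℝ, ℝ × ℝ × ℝ) 𝓘(ℝ, E) β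
                    (ψ r, s, 2 * t + (-1)) (1, 0, 0) +
                    b • mfderiv 𝓘(ℝ, ℝ × ℝ × ℝ) 𝓘(ℝ, E) β
                    (ψ r, s, 2 * t + (-1)) (0, 1, 0)) := by
                module
              rw [this, h0, smul_zero])
  refine ⟨_, key, ?_, ?_⟩
  · intro s t
    show (if t ≤ 1/2 then h (φ 0, 2 * t + 0) else β (ψ 0, s, 2 * t + (-1)))
      = leftWhisker γ g (s, t)
    show _ = if t ≤ 1/2 then γ (2 * t) else g (s, 2 * t - 1)
    split_ifs with ht
    · rw [show (2 * t + (0:ℝ)) = 2 * t by ring, φ0 0 (by norm_num), hh0]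
    · rw [show (2 * t + (-1:ℝ)) = 2 * t - 1 by ring, ψ0 0 (by norm_num), hβ0]
  · intro s t
    show (if t ≤ 1/2 then h (φ 1, 2 * t + 0) else β (ψ 1, s, 2 * t + (-1)))
      = leftWhisker γ' g' (s, t)
    show _ = if t ≤ 1/2 then γ' (2 * t) else g' (s, 2 * t - 1)
    split_ifs with ht
    · rw [show (2 * t + (0:ℝ)) = 2 * t by ring, φ1 1 (by norm_num), hh1]
    · rw [show (2 * t + (-1:ℝ)) = 2 * t - 1 by ring, ψ1 1 (by norm_num), hβ1]

end Aux9
section Aux10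

open Module Submodule Filter

variable {E}

set_option maxHeartbeats 1600000 in
theorem right_whisker_homotopic {g g' : ℝ × ℝ → M} {γ γ' : ℝ → M}
    {β : ℝ × ℝ × ℝ → M} {h : ℝ × ℝ → M}
    (hβ : IsLaminatedRank2Homotopy E β)
    (hβ0 : ∀ s t, β (0, s, t) = g (s, t)) (hβ1 : ∀ s t, β (1, s, t) = g' (s, t))
    (hh : IsRank1Homotopy E h)
    (hh0 : ∀ t, h (0, t) = γ t) (hh1 : ∀ t, h (1, t) = γ' t)
    (hmatch : g (0, 1) = γ 0) :
    LamRank2Homotopic E (rightWhisker g γ) (rightWhisker g' γ') := by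
  obtain ⟨⟨⟨hsmβ, ⟨εβ, hεβ0, βbr, βbr', βbs, βbs', βbt, βbt'⟩, βs0, βs1⟩, βrk, βr0, βr1⟩, βlam⟩ := hβ
  obtain ⟨⟨hsmh, ⟨εh, hεh0, hbr, hbr', hbt, hbt'⟩, hs0, hs1⟩, hrk⟩ := hh
  have hφ := contDiff_stepFun 1
  have hψ := contDiff_stepFun 3
  set φ : ℝ → ℝ := stepFun 1 with hφdef
  set ψ : ℝ → ℝ := stepFun 3 with hψdef
  have φ0 : ∀ r : ℝ, r ≤ 1/5 → φ r = 0 := fun r hr => stepFun_eq_zero (by linarith)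
  have φ1 : ∀ r : ℝ, 2/5 ≤ r → φ r = 1 := fun r hr => stepFun_eq_one (by norm_num; linarith)
  have ψ0 : ∀ r : ℝ, r ≤ 3/5 → ψ r = 0 := fun r hr => stepFun_eq_zero (by linarith)
  have ψ1 : ∀ r : ℝ, 4/5 ≤ r → ψ r = 1 := fun r hr => stepFun_eq_one (by norm_num; linarith)
  have dφ : ∀ r : ℝ, 2/5 < r → deriv φ r = 0 := fun r hr => deriv_stepFun_right (by norm_num; linarith)
  have dψ : ∀ r : ℝ, r < 3/5 → deriv ψ r = 0 := fun r hr => deriv_stepFun_left (by linarith)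
  set ε : ℝ := min (min (1/5) (εh/2)) (εβ/2) with hεdef
  set δ : ℝ := min (εh/2) (εβ/2) with hδdef
  have hε0 : 0 < ε := lt_min (lt_min (by norm_num) (by linarith)) (by linarith)
  have hδ0 : 0 < δ := lt_min (by linarith) (by linarith)
  have hε1 : ε ≤ 1/5 := le_trans (min_le_left _ _) (min_le_left _ _)
  have hε2 : ε ≤ εh/2 := le_trans (min_le_left _ _) (min_le_right _ _)
  have hε3 : ε ≤ εβ/2 := min_le_right _ _
  have hδ1 : δ ≤ εh/2 := min_le_left _ _
  have hδ2 : δ ≤ εβ/2 := min_le_right _ _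
  have key := glue_laminated (E := E)
    (G1 := fun x : ℝ × ℝ × ℝ => β (φ x.1, x.2.1, 2 * x.2.2 + 0))
    (G2 := fun x : ℝ × ℝ × ℝ => h (ψ x.1, 2 * x.2.2 + (-1)))
    hδ0 hε0 (by linarith)
    (bModel_smooth hsmβ hφ 2 0)
    (hModel_smooth hsmh hψ 2 (-1))
    (by -- overlap
      rintro ⟨r, s, t⟩ h1 h2
      simp only at h1 h2
      show β (φ r, s, 2 * t + 0) = h (ψ r, 2 * t + (-1))
      have e1 : β (φ r, s, 2 * t + 0) = β (φ r, s, 1) := βbt' (φ r) s _ (by linarith)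
      have e2 : h (ψ r, 2 * t + (-1)) = h (ψ r, 0) := hbt (ψ r) _ (by linarith)
      rw [e1, e2, βs1 (φ r) s 0 0, hβ0 0 1, hmatch, ← hh0 0, hs0 0 (ψ r)])
    (by -- br1
      intro r s t hr
      show β (φ r, s, 2 * t + 0) = β (φ 0, s, 2 * t + 0)
      rw [φ0 r (by linarith), φ0 0 (by norm_num)])
    (by -- br1'
      intro r s t hr
      show β (φ r, s, 2 * t + 0) = β (φ 1, s, 2 * t + 0)
      rw [φ1 r (by linarith), φ1 1 (by norm_num)])
    (by -- bs1
      intro r s t hs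
      exact βbs (φ r) s _ (by linarith))
    (by -- bs1'
      intro r s t hs
      exact βbs' (φ r) s _ (by linarith))
    (by -- bt1
      intro r s t ht
      show β (φ r, s, 2 * t + 0) = β (φ r, s, 2 * 0 + 0)
      rw [show (2 * (0:ℝ) + 0) = 0 by norm_num]
      exact βbt (φ r) s _ (by linarith))
    (by -- br2
      intro r s t hr
      show h (ψ r, 2 * t + (-1)) = h (ψ 0, 2 * t + (-1))
      rw [ψ0 r (by linarith), ψ0 0 (by norm_num)])
    (by -- br2'
      intro r s t hr
      show h (ψ r, 2 * t + (-1)) = h (ψ 1, 2 * t + (-1))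
      rw [ψ1 r (by linarith), ψ1 1 (by norm_num)])
    (by intro r s t _; rfl)
    (by intro r s t _; rfl)
    (by -- bt2
      intro r s t ht
      show h (ψ r, 2 * t + (-1)) = h (ψ r, 2 * 1 + (-1))
      rw [show (2 * (1:ℝ) + (-1)) = 1 by norm_num]
      exact hbt' (ψ r) _ (by linarith))
    (by -- sing0
      intro r s r' s'
      show β (φ r, s, 2 * 0 + 0) = β (φ r', s', 2 * 0 + 0)
      rw [show (2 * (0:ℝ) + 0) = 0 by norm_num]
      exact βs0 (φ r) s (φ r') s')
    (by -- sing1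
      intro r s r' s'
      show h (ψ r, 2 * 1 + (-1)) = h (ψ r', 2 * 1 + (-1))
      rw [show (2 * (1:ℝ) + (-1)) = 1 by norm_num]
      exact hs1 (ψ r) (ψ r'))
    (bModel_rank hsmβ βrk hφ 2 0)
    (fun p => le_trans (hModel_rank hsmh hrk hψ 2 (-1) p) (by norm_num))
    (by -- rr1
      intro c hc p
      rcases hc with rfl | rfl
      · exact restr_rank_le βr0.1.1 βr0.2 hφ 2 0 (fun q => rfl) p
      · exact restr_rank_le βr1.1.1 βr1.2 hφ 2 0 (fun q => rfl) p)
    (by -- rr2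
      intro c _ p
      exact restr_rank_le hsmh hrk hψ 2 (-1) (fun q => rfl) p)
    (by -- lamination
      intro r s
      by_cases hr : r ≤ 1/2
      · have hdψ : deriv ψ r = 0 := dψ r (by linarith)
        have hdr2 : ∀ t : ℝ, mfderiv 𝓘(ℝ, ℝ × ℝ × ℝ) 𝓘(ℝ, E)
            (fun x : ℝ × ℝ × ℝ => h (ψ x.1, 2 * x.2.2 + (-1))) (r, s, t) (1, 0, 0) = 0 :=
          fun t => hModel_dr hsmh hψ 2 (-1) (r, s, t) hdψ
        have hds2 : ∀ t : ℝ, mfderiv 𝓘(ℝ, ℝ × ℝ × ℝ) 𝓘(ℝ, E)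
            (fun x : ℝ × ℝ × ℝ => h (ψ x.1, 2 * x.2.2 + (-1))) (r, s, t) (0, 1, 0) = 0 :=
          fun t => hModel_ds hsmh hψ 2 (-1) (r, s, t)
        rcases βlam (φ r) s with hcase | hcase | ⟨a, b, hab, hall⟩
        · left
          constructor
          · intro t
            obtain ⟨a, b, hab, hsum⟩ := hcase (2 * t + 0)
            obtain ⟨c, d, hcd, hsum2⟩ := dep_pair_smul (deriv φ r) (2 : ℝ) ⟨a, b, hab, hsum⟩
            refine ⟨c, d, hcd, ?_⟩
            rw [bModel_dr hsmβ hφ 2 0 (r, s, t), bModel_dt hsmβ hφ 2 0 (r, s, t),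
              show innerMap φ 2 0 (r, s, t) = (φ r, s, 2 * t + 0) from rfl]
            exact hsum2
          · intro t
            refine ⟨1, 0, by simp, ?_⟩
            rw [hdr2 t]
            simp
        · right; left
          constructor
          · intro t
            obtain ⟨a, b, hab, hsum⟩ := hcase (2 * t + 0)
            obtain ⟨c, d, hcd, hsum2⟩ := dep_pair_smul (1 : ℝ) (2 : ℝ) ⟨a, b, hab, hsum⟩
            refine ⟨c, d, hcd, ?_⟩
            rw [bModel_ds hsmβ hφ 2 0 (r, s, t), bModel_dt hsmβ hφ 2 0 (r, s, t),
              show innerMap φ 2 0 (r, s, t) = (φ r, s, 2 * t + 0) from rfl]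
            simpa using hsum2
          · intro t
            exact ⟨1, 0, by simp, by rw [hds2 t]; simp⟩
        · right; right
          by_cases ha : a = 0
          · have hb : b ≠ 0 := by
              intro hb; exact hab (by simp [ha, hb, Prod.ext_iff])
            refine ⟨0, 1, by simp, fun t => ⟨?_, ?_⟩⟩
            · have h0 := hall (2 * t + 0)
              rw [ha] at h0
              have hY : mfderiv 𝓘(ℝ, ℝ × ℝ × ℝ) 𝓘(ℝ, E) β
                  (innerMap φ 2 0 (r, s, t)) (0, 1, 0) = 0 := by
                have := h0
                simp only [zero_smul, zero_add] at this
                exact (smul_eq_zero.1 this).resolve_left hb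
              rw [bModel_ds hsmβ hφ 2 0 (r, s, t), hY]
              simp
              exact smul_zero (A := E) (1 : ℝ)
            · rw [hds2 t]; simp
          · refine ⟨a, deriv φ r * b, by simp [Prod.ext_iff, ha], fun t => ⟨?_, ?_⟩⟩
            · rw [bModel_dr hsmβ hφ 2 0 (r, s, t), bModel_ds hsmβ hφ 2 0 (r, s, t)]
              have h0 := hall (2 * t + 0)
              have hrw : innerMap φ 2 0 (r, s, t) = (φ r, s, 2 * t + 0) := rfl
              rw [hrw]
              have : a • (deriv φ r • mfderiv 𝓘(ℝ, ℝ × ℝ × ℝ) 𝓘(ℝ, E) β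
                    (φ r, s, 2 * t + 0) (1, 0, 0)) +
                  (deriv φ r * b) • mfderiv 𝓘(ℝ, ℝ × ℝ × ℝ) 𝓘(ℝ, E) β
                    (φ r, s, 2 * t + 0) (0, 1, 0)
                  = deriv φ r • (a • mfderiv 𝓘(ℝ, ℝ × ℝ × ℝ) 𝓘(ℝ, E) β
                    (φ r, s, 2 * t + 0) (1, 0, 0) +
                    b • mfderiv 𝓘(ℝ, ℝ × ℝ × ℝ) 𝓘(ℝ, E) β
                    (φ r, s, 2 * t + 0) (0, 1, 0)) := by
                module
              rw [this, h0, smul_zero]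
            · rw [hdr2 t, hds2 t]; simp
      · push_neg at hr
        left
        constructor
        · intro t
          refine ⟨1, 0, by simp, ?_⟩
          rw [bModel_dr hsmβ hφ 2 0 (r, s, t), dφ r (by linarith)]
          simp
          exact smul_zero (A := E) (1 : ℝ)
        · intro t
          exact hModel_dep hsmh hrk hψ 2 (-1) (r, s, t) (1, 0, 0) (0, 0, 1))
  refine ⟨_, key, ?_, ?_⟩
  · intro s t
    show (if t ≤ 1/2 then β (φ 0, s, 2 * t + 0) else h (ψ 0, 2 * t + (-1)))
      = rightWhisker g γ (s, t)
    show _ = if t ≤ 1/2 then g (s, 2 * t) else γ (2 * t - 1)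
    split_ifs with ht
    · rw [show (2 * t + (0:ℝ)) = 2 * t by ring, φ0 0 (by norm_num), hβ0]
    · rw [show (2 * t + (-1:ℝ)) = 2 * t - 1 by ring, ψ0 0 (by norm_num), hh0]
  · intro s t
    show (if t ≤ 1/2 then β (φ 1, s, 2 * t + 0) else h (ψ 1, 2 * t + (-1)))
      = rightWhisker g' γ' (s, t)
    show _ = if t ≤ 1/2 then g' (s, 2 * t) else γ' (2 * t - 1)
    split_ifs with ht
    · rw [show (2 * t + (0:ℝ)) = 2 * t by ring, φ1 1 (by norm_num), hβ1]
    · rw [show (2 * t + (-1:ℝ)) = 2 * t - 1 by ring, ψ1 1 (by norm_num), hh1]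

end Aux10

/-- Whiskering of laminated 2-tracks by 1-tracks is well defined. -/
theorem whisker_lamRank2Homotopic (g g' : ℝ × ℝ → M) (γ γ' : ℝ → M)
    (hg : IsTwoPath E g) (hg' : IsTwoPath E g')
    (hγ : IsOnePath E γ) (hγ' : IsOnePath E γ')
    (Hg : LamRank2Homotopic E g g') (Hγ : Rank1Homotopic E γ γ') :
    (γ 1 = g (0, 0) → LamRank2Homotopic E (leftWhisker γ g) (leftWhisker γ' g')) ∧
    (g (0, 1) = γ 0 → LamRank2Homotopic E (rightWhisker g γ) (rightWhisker g' γ')) := by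
  obtain ⟨β, hβlam, hβ0, hβ1⟩ := Hg
  obtain ⟨h, hh, hh0, hh1⟩ := Hγ
  constructor
  · intro hm
    exact left_whisker_homotopic hβlam hβ0 hβ1 hh hh0 hh1 hm
  · intro hm
    exact right_whisker_homotopic hβlam hβ0 hβ1 hh hh0 hh1 hm
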